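/- Let A be a finitely generated abelian group and let ℂ[A] be its group algebra over ℂ. Then the map sending a group homomorphism α : A → ℂˣ to the kernel of its ℂ-algebra extension α' : ℂ[A] → ℂ is a bijection from Hom(A, ℂˣ) to the set of maximal ideals of ℂ[A]. -/

import Mathlib

/-- For a finitely generated abelian group `A`, the map sending a group homomorphism
`α : A → ℂˣ` to the kernel of its `ℂ`-algebra extension `α' : ℂ[A] → ℂ` is a bijection
from `Hom(A, ℂˣ)` onto the set of maximal ideals of the group algebra `ℂ[A]`. -/
theorem stmt_1 (A : Type*) [CommGroup A] [Group.FG A] :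
    Function.Injective
      (fun α : A →* ℂˣ =>
        RingHom.ker ((MonoidAlgebra.lift ℂ ℂ A ((Units.coeHom ℂ).comp α)) :
          MonoidAlgebra ℂ A →ₐ[ℂ] ℂ).toRingHom) ∧
    Set.range
      (fun α : A →* ℂˣ =>
        RingHom.ker ((MonoidAlgebra.lift ℂ ℂ A ((Units.coeHom ℂ).comp α)) :
          MonoidAlgebra ℂ A →ₐ[ℂ] ℂ).toRingHom)
      = {I : Ideal (MonoidAlgebra ℂ A) | I.IsMaximal} := by
  constructor
  · intro α β h
    set f := (MonoidAlgebra.lift ℂ ℂ A ((Units.coeHom ℂ).comp α)) with hf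
    set g := (MonoidAlgebra.lift ℂ ℂ A ((Units.coeHom ℂ).comp β)) with hg
    have h' : RingHom.ker f.toRingHom = RingHom.ker g.toRingHom := h
    have key : ∀ x : MonoidAlgebra ℂ A, f x = g x := by
      intro x
      have hmem : x - algebraMap ℂ (MonoidAlgebra ℂ A) (g x) ∈ RingHom.ker g.toRingHom := by
        rw [RingHom.mem_ker]
        simp only [AlgHom.toRingHom_eq_coe, RingHom.coe_coe, map_sub, AlgHom.commutes]
        simp [sub_eq_zero]
      rw [← h'] at hmem
      rw [RingHom.mem_ker] at hmem
      simp only [AlgHom.toRingHom_eq_coe, RingHom.coe_coe, map_sub, AlgHom.commutes] at hmem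
      have := sub_eq_zero.mp hmem
      simpa using this
    ext a
    have := key (MonoidAlgebra.of ℂ A a)
    simp only [hf, hg, MonoidAlgebra.lift_of] at this
    exact this
  · ext I
    constructor
    · rintro ⟨α, rfl⟩
      simp only [Set.mem_setOf_eq]
      have hsurj : Function.Surjective
          ((MonoidAlgebra.lift ℂ ℂ A ((Units.coeHom ℂ).comp α)) :
            MonoidAlgebra ℂ A →ₐ[ℂ] ℂ).toRingHom := by
        intro c
        refine ⟨algebraMap ℂ (MonoidAlgebra ℂ A) c, ?_⟩
        simp
      exact RingHom.ker_isMaximal_of_surjective _ hsurj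
    · intro hI
      simp only [Set.mem_setOf_eq] at hI
      haveI : I.IsMaximal := hI
      haveI : Monoid.FG A := Group.fg_iff_monoid_fg.mp ‹_›
      haveI : Algebra.FiniteType ℂ (MonoidAlgebra ℂ A) := inferInstance
      haveI : Algebra.FiniteType ℂ (MonoidAlgebra ℂ A ⧸ I) :=
        Algebra.FiniteType.of_surjective (Ideal.Quotient.mkₐ ℂ I)
          (Ideal.Quotient.mkₐ_surjective ℂ I)
      letI : Field (MonoidAlgebra ℂ A ⧸ I) := Ideal.Quotient.field I
      haveI : Module.Finite ℂ (MonoidAlgebra ℂ A ⧸ I) :=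
        finite_of_finite_type_of_isJacobsonRing ℂ _
      haveI : Algebra.IsIntegral ℂ (MonoidAlgebra ℂ A ⧸ I) := Algebra.IsIntegral.of_finite ℂ _
      have hbij : Function.Bijective (algebraMap ℂ (MonoidAlgebra ℂ A ⧸ I)) :=
        ⟨(algebraMap ℂ _).injective,
          IsAlgClosed.algebraMap_bijective_of_isIntegral.2⟩
      let e : ℂ ≃ₐ[ℂ] (MonoidAlgebra ℂ A ⧸ I) :=
        AlgEquiv.ofBijective (Algebra.ofId ℂ _) hbij
      let φ : MonoidAlgebra ℂ A →ₐ[ℂ] ℂ :=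
        (e.symm.toAlgHom).comp (Ideal.Quotient.mkₐ ℂ I)
      have hφker : RingHom.ker φ.toRingHom = I := by
        ext x
        simp only [RingHom.mem_ker, φ, AlgHom.toRingHom_eq_coe, RingHom.coe_coe,
          AlgHom.coe_comp, Function.comp_apply, AlgEquiv.toAlgHom_eq_coe, AlgHom.coe_coe]
        rw [show ((e.symm : _ →ₐ[ℂ] _) ((Ideal.Quotient.mkₐ ℂ I) x)) = e.symm ((Ideal.Quotient.mkₐ ℂ I) x) from rfl,
          show (0 : ℂ) = e.symm 0 by simp, e.symm.injective.eq_iff]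
        simp [Ideal.Quotient.eq_zero_iff_mem]
      -- build α from φ
      let α : A →* ℂˣ :=
        { toFun := fun a => Units.mk (φ (MonoidAlgebra.of ℂ A a)) (φ (MonoidAlgebra.of ℂ A a⁻¹))
            (by rw [← map_mul, ← map_mul, mul_inv_cancel, map_one, map_one])
            (by rw [← map_mul, ← map_mul, inv_mul_cancel, map_one, map_one])
          map_one' := by ext; show φ (MonoidAlgebra.of ℂ A 1) = 1; rw [map_one, map_one]
          map_mul' := fun a b => by
            ext
            show φ (MonoidAlgebra.of ℂ A (a * b)) = φ (MonoidAlgebra.of ℂ A a) * φ (MonoidAlgebra.of ℂ A b)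
            rw [map_mul, map_mul] }
      refine ⟨α, ?_⟩
      have hlift : (MonoidAlgebra.lift ℂ ℂ A ((Units.coeHom ℂ).comp α)) = φ := by
        apply MonoidAlgebra.algHom_ext
        intro a
        simp [α, MonoidAlgebra.lift_single]
        exact Subsingleton.elim _ _
      simp only [hlift, hφker]
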